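/- A partition β = (β₁,…,β_k) of n+2 satisfies: there exists a partition α of n with the Kostka number K_{β, w(α)} > 0 if and only if β₁ − 2 ≥ β₃ + 2β₄ + ⋯ + (k−2)β_k, where w(α) ∈ P(n+2) is obtained from α = (n^{i_n},…,1^{i_1}) by sorting (n+2−Σi_j, i₁,…,i_n). -/

import Mathlib

/-- For a partition `α = (n^{i_n},…,1^{i_1})` of `n`, the partition `w(α)` of `n+2`:
the sorted (non-increasing) rearrangement of `(n+2−Σ i_j, i_1, …, i_n)` with zeros
removed, given as a list of parts in non-increasing order. Here `i_j` is the multiplicity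
of the part `j` in `α`. -/
def wAlpha (n : ℕ) (α : Nat.Partition n) : List ℕ :=
  Multiset.sort
    (Multiset.filter (0 < ·)
      ((n + 2 - Multiset.card α.parts) ::ₘ
        Multiset.map (fun j => Multiset.count j α.parts)
          (Multiset.map (· + 1) (Multiset.range n)))) (· ≥ ·)

namespace Stmt18Aux

lemma sum_range_getD (l : List ℕ) : ∑ j ∈ Finset.range l.length, l.getD j 0 = l.sum := by
  induction l with
  | nil => simp
  | cons a t ih =>
    rw [List.length_cons, Finset.sum_range_succ']
    simp only [List.getD_cons_succ, List.getD_cons_zero, List.sum_cons, ih]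
    omega

/-- `gval l = ∑ j * l[j]` -/
def gval : List ℕ → ℕ
  | [] => 0
  | _ :: t => gval t + t.sum

lemma gval_eq (l : List ℕ) : gval l = ∑ j ∈ Finset.range l.length, j * l.getD j 0 := by
  induction l with
  | nil => simp [gval]
  | cons a t ih =>
    rw [List.length_cons, Finset.sum_range_succ']
    simp only [List.getD_cons_succ, List.getD_cons_zero, mul_zero, add_zero, gval, ih]
    rw [← sum_range_getD t, ← Finset.sum_add_distrib]
    rw [Nat.zero_mul, Nat.add_zero]
    exact Finset.sum_congr rfl (fun j _ => by ring)

/-- sum of pairwise minima -/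
def pmin : List ℕ → ℕ
  | [] => 0
  | a :: t => (t.map (min a)).sum + pmin t

lemma pmin_perm {l l' : List ℕ} (h : l.Perm l') : pmin l = pmin l' := by
  induction h with
  | nil => rfl
  | cons a h ih => simp only [pmin, ih, (h.map _).sum_eq]
  | swap a b l =>
    simp only [pmin, List.map_cons, List.sum_cons]
    rw [min_comm a b]
    ring
  | trans _ _ ih1 ih2 => omega

lemma sum_map_min_le (a : ℕ) (l : List ℕ) : (l.map (min a)).sum ≤ l.sum := by
  induction l with
  | nil => simp
  | cons x t ih => simpa using Nat.add_le_add (min_le_right a x) ih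

lemma pmin_le_gval (l : List ℕ) : pmin l ≤ gval l := by
  induction l with
  | nil => exact Nat.le_refl _
  | cons a t ih =>
    show (t.map (min a)).sum + pmin t ≤ gval t + t.sum
    have := sum_map_min_le a t
    omega

lemma gval_eq_pmin_of_sorted {l : List ℕ} (h : l.Pairwise (· ≥ ·)) : gval l = pmin l := by
  induction l with
  | nil => rfl
  | cons a t ih =>
    rw [List.pairwise_cons] at h
    have : t.map (min a) = t := by
      have h1 : t.map (min a) = t.map id := List.map_congr_left (fun x hx => min_eq_right (h.1 x hx))
      rw [h1, List.map_id]
    simp only [gval, pmin, this, ih h.2]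
    omega

lemma sum_map_min_filter (a : ℕ) (l : List ℕ) :
    ((l.filter (fun x => decide (0 < x))).map (min a)).sum = (l.map (min a)).sum := by
  induction l with
  | nil => rfl
  | cons x t ih =>
    by_cases hx : 0 < x
    · rw [List.filter_cons_of_pos (by simpa using hx)]
      simp [ih]
    · rw [List.filter_cons_of_neg (by simpa using hx)]
      have : x = 0 := by omega
      subst this
      simp [ih]

lemma pmin_filter (l : List ℕ) : pmin (l.filter (fun x => decide (0 < x))) = pmin l := by
  induction l with
  | nil => rfl
  | cons a t ih =>
    by_cases ha : 0 < a
    · rw [List.filter_cons_of_pos (by simpa using ha)]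
      simp only [pmin, ih, sum_map_min_filter]
    · rw [List.filter_cons_of_neg (by simpa using ha)]
      have : a = 0 := by omega
      subst this
      simp only [pmin, ih]
      have : t.map (min 0) = t.map (fun _ => 0) := List.map_congr_left (fun x _ => by omega)
      simp [this]

/-- weighted count sum equals multiset sum -/
lemma sum_weighted_count (n : ℕ) (s : Multiset ℕ) (h1 : ∀ x ∈ s, 0 < x) (h2 : ∀ x ∈ s, x ≤ n) :
    ∑ j ∈ Finset.range n, (j + 1) * Multiset.count (j + 1) s = s.sum := by
  induction s using Multiset.induction with
  | empty => simp
  | cons a t ih =>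
    have ha1 : 0 < a := h1 a (Multiset.mem_cons_self a t)
    have ha2 : a ≤ n := h2 a (Multiset.mem_cons_self a t)
    simp only [Multiset.count_cons, Multiset.sum_cons]
    have hsplit : ∀ j ∈ Finset.range n,
        (j + 1) * (Multiset.count (j + 1) t + if j + 1 = a then 1 else 0)
          = (j + 1) * Multiset.count (j + 1) t + (if j = a - 1 then j + 1 else 0) := by
      intro j _
      by_cases h : j + 1 = a
      · rw [if_pos h, if_pos (by omega)]; ring
      · rw [if_neg h, if_neg (by omega)]; ring
    rw [Finset.sum_congr rfl hsplit, Finset.sum_add_distrib,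
      ih (fun x hx => h1 x (Multiset.mem_cons_of_mem hx)) (fun x hx => h2 x (Multiset.mem_cons_of_mem hx)),
      Finset.sum_ite_eq' (Finset.range n) (a - 1) (fun j => j + 1), if_pos (by simp; omega)]
    omega


lemma count_bind_range (k : ℕ) (c : ℕ → ℕ) (p : ℕ) :
    Multiset.count p ((Multiset.range k).bind fun t => Multiset.replicate (c t) t)
      = if p < k then c p else 0 := by
  induction k with
  | zero => simp
  | succ k ih =>
    rw [Multiset.range_succ, Multiset.cons_bind, Multiset.count_add, ih,
      Multiset.count_replicate]
    by_cases h : p = k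
    · subst h; simp
    · rw [if_neg (fun hh => h hh.symm)]
      by_cases h2 : p < k
      · rw [if_pos h2, if_pos (by omega)]; omega
      · rw [if_neg h2, if_neg (by omega)]

lemma sum_bind_range (k : ℕ) (c : ℕ → ℕ) :
    ((Multiset.range k).bind fun t => Multiset.replicate (c t) t).sum
      = ∑ t ∈ Finset.range k, c t * t := by
  induction k with
  | zero => simp
  | succ k ih =>
    rw [Multiset.range_succ, Multiset.cons_bind, Multiset.sum_add, ih,
      Multiset.sum_replicate, Finset.sum_range_succ, smul_eq_mul]
    omega

lemma card_bind_range (k : ℕ) (c : ℕ → ℕ) :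
    Multiset.card ((Multiset.range k).bind fun t => Multiset.replicate (c t) t)
      = ∑ t ∈ Finset.range k, c t := by
  induction k with
  | zero => simp
  | succ k ih =>
    rw [Multiset.range_succ, Multiset.cons_bind, Multiset.card_add, ih,
      Multiset.card_replicate, Finset.sum_range_succ]
    omega

lemma pos_of_mem_bind_range {k : ℕ} {c : ℕ → ℕ} (hc : c 0 = 0) {x : ℕ}
    (hx : x ∈ (Multiset.range k).bind fun t => Multiset.replicate (c t) t) : 0 < x := by
  rw [Multiset.mem_bind] at hx
  obtain ⟨t, _, hx⟩ := hx
  rw [Multiset.mem_replicate] at hx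
  rcases hx with ⟨hne, rfl⟩
  rcases Nat.eq_zero_or_pos x with h | h
  · subst h; exact absurd hc hne
  · exact h

/-- Row-count lemma for ofRowLens diagrams. -/
lemma card_row_filter (β : List ℕ) (hsort : β.Pairwise (· ≥ ·)) (r : ℕ) :
    ((YoungDiagram.ofRowLens β (List.sortedGE_iff_pairwise.mpr hsort)).cells.filter (fun c => c.1 = r)).card = β.getD r 0 := by
  have : ((YoungDiagram.ofRowLens β (List.sortedGE_iff_pairwise.mpr hsort)).cells.filter (fun c => c.1 = r))
      = (Finset.range (β.getD r 0)).image (fun j => (r, j)) := by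
    ext ⟨i, j⟩
    simp only [Finset.mem_filter, YoungDiagram.mem_cells, YoungDiagram.mem_ofRowLens,
      Finset.mem_image, Finset.mem_range, Prod.mk.injEq]
    constructor
    · rintro ⟨⟨h1, h2⟩, rfl⟩
      exact ⟨j, by rw [List.getD_eq_getElem β 0 h1]; exact ⟨h2, rfl, rfl⟩⟩
    · rintro ⟨j', hj', rfl, rfl⟩
      have hr : r < β.length := by
        by_contra h
        rw [List.getD_eq_default β 0 (by omega)] at hj'
        omega
      rw [List.getD_eq_getElem β 0 hr] at hj'
      exact ⟨⟨hr, hj'⟩, rfl⟩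
  rw [this, Finset.card_image_of_injective _ (fun a b h => by simpa using h),
    Finset.card_range]

lemma wAlpha_coe (n : ℕ) (α : Nat.Partition n) :
    Multiset.filter (0 < ·)
      ((n + 2 - Multiset.card α.parts) ::ₘ
        Multiset.map (fun j => Multiset.count j α.parts)
          (Multiset.map (· + 1) (Multiset.range n)))
    = ↑(((n + 2 - Multiset.card α.parts) ::
        (List.range n).map (fun j => Multiset.count (j + 1) α.parts)).filter
        (fun x => decide (0 < x))) := by
  rw [Multiset.map_map, ← Multiset.coe_range, Multiset.map_coe, Multiset.cons_coe,
    Multiset.filter_coe]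
  rfl


lemma sort_eq_of_sorted {s : Multiset ℕ} {L : List ℕ} (hL : L.Pairwise (· ≥ ·))
    (h : (↑L : Multiset ℕ) = s) : Multiset.sort s (· ≥ ·) = L := by
  subst h
  exact List.Perm.eq_of_pairwise' (Multiset.pairwise_sort _ _) hL
    (Multiset.coe_eq_coe.mp (Multiset.sort_eq (↑L : Multiset ℕ) (· ≥ ·)))

lemma filter_map_pos (l : List ℕ) (g : ℕ → ℕ) (h : ∀ j ∈ l, 0 < g j) :
    (l.map g).filter (fun x => decide (0 < x)) = l.map g := by
  rw [List.filter_eq_self]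
  intro a ha
  rw [List.mem_map] at ha
  obtain ⟨j, hj, rfl⟩ := ha
  simp [h j hj]

/-- we can drop a final all-zero segment -/
lemma filter_map_range_truncate (g : ℕ → ℕ) (m n : ℕ) (hmn : m ≤ n)
    (h : ∀ j, m ≤ j → j < n → g j = 0) :
    ((List.range n).map g).filter (fun x => decide (0 < x))
      = ((List.range m).map g).filter (fun x => decide (0 < x)) := by
  induction n, hmn using Nat.le_induction with
  | base => rfl
  | succ n hmn ih =>
    rw [List.range_succ, List.map_append, List.filter_append]
    rw [ih (fun j h1 h2 => h j h1 (by omega))]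
    have : List.filter (fun x => decide (0 < x)) (List.map g [n]) = [] := by
      simp [h n hmn (by omega)]
    rw [this, List.append_nil]

lemma filter_map_range_succ (g : ℕ → ℕ) (m : ℕ) :
    ((List.range (m + 1)).map g).filter (fun x => decide (0 < x))
      = ((List.range m).map g).filter (fun x => decide (0 < x))
        ++ [g m].filter (fun x => decide (0 < x)) := by
  rw [List.range_succ, List.map_append, List.filter_append]
  rfl

/-- splitting `filter pos (map g (range n))` at two special indices `j1 < j2 < n`:
below `j1` all positive, strictly between and above `j2` all zero -/
lemma filter_map_range_split (n j1 j2 : ℕ) (g : ℕ → ℕ) (h12 : j1 < j2) (h2n : j2 < n)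
    (hlow : ∀ j < j1, 0 < g j) (hmid : ∀ j, j1 < j → j < j2 → g j = 0)
    (hhigh : ∀ j, j2 < j → j < n → g j = 0) :
    ((List.range n).map g).filter (fun x => decide (0 < x)) =
      (List.range j1).map g ++ ([g j1].filter (fun x => decide (0 < x))
        ++ [g j2].filter (fun x => decide (0 < x))) := by
  rw [filter_map_range_truncate g (j2 + 1) n (by omega) (fun j h1 h2 => hhigh j (by omega) h2),
    filter_map_range_succ,
    filter_map_range_truncate g (j1 + 1) j2 (by omega) (fun j h1 h2 => hmid j (by omega) h2),
    filter_map_range_succ,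
    filter_map_pos _ g (fun j hj => hlow j (List.mem_range.mp hj)),
    List.append_assoc]

/-- single special index -/
lemma filter_map_range_single (n j2 v : ℕ) (g : ℕ → ℕ) (h2n : j2 < n)
    (hmid : ∀ j, j < j2 → g j = 0) (hval : g j2 = v)
    (hhigh : ∀ j, j2 < j → j < n → g j = 0) :
    ((List.range n).map g).filter (fun x => decide (0 < x))
      = [v].filter (fun x => decide (0 < x)) := by
  rw [filter_map_range_truncate g (j2 + 1) n (by omega) (fun j h1 h2 => hhigh j (by omega) h2),
    filter_map_range_succ,
    filter_map_range_truncate g 0 j2 (by omega) (fun j h1 h2 => hmid j h2), hval]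
  rfl


lemma cell_le_entry {μ : YoungDiagram} (T : SemistandardYoungTableau μ) :
    ∀ i j, (i, j) ∈ μ → i ≤ T i j := by
  intro i
  induction i with
  | zero => intro j _; omega
  | succ i ih =>
    intro j hij
    have h1 : (i, j) ∈ μ := μ.up_left_mem (by omega) (le_refl j) hij
    have h2 : T i j < T (i + 1) j := T.col_strict (by omega) hij
    have := ih j h1
    omega

lemma forward (n : ℕ) (β : List ℕ) (hsort : β.Pairwise (· ≥ ·))
    (α : Nat.Partition n)
    (T : SemistandardYoungTableau (YoungDiagram.ofRowLens β (List.sortedGE_iff_pairwise.mpr hsort)))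
    (hT : ∀ j : ℕ, ((YoungDiagram.ofRowLens β (List.sortedGE_iff_pairwise.mpr hsort)).cells.filter
        (fun c => T c.1 c.2 = j)).card = (wAlpha n α).getD j 0) :
    ∑ r ∈ Finset.range β.length, r * β.getD r 0 ≤ n := by
  set L := wAlpha n α with hLdef
  have hLs : L.Pairwise (· ≥ ·) := Multiset.pairwise_sort _ _
  -- entries of cells are < L.length
  have hent : ∀ c ∈ (YoungDiagram.ofRowLens β (List.sortedGE_iff_pairwise.mpr hsort)).cells, T c.1 c.2 ∈ Finset.range L.length := by
    intro c hc
    rw [Finset.mem_range]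
    by_contra h
    push_neg at h
    have h0 := hT (T c.1 c.2)
    rw [List.getD_eq_default _ _ h] at h0
    have hmem : c ∈ (YoungDiagram.ofRowLens β (List.sortedGE_iff_pairwise.mpr hsort)).cells.filter (fun c' => T c'.1 c'.2 = T c.1 c.2) :=
      Finset.mem_filter.mpr ⟨hc, rfl⟩
    have hcard := Finset.card_pos.mpr ⟨c, hmem⟩
    omega
  -- N(β) = sum of row indices over cells
  have h3 : ∑ c ∈ (YoungDiagram.ofRowLens β (List.sortedGE_iff_pairwise.mpr hsort)).cells, c.1 = ∑ r ∈ Finset.range β.length, r * β.getD r 0 := by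
    rw [← Finset.sum_fiberwise_of_maps_to (t := Finset.range β.length)
      (g := fun c : ℕ × ℕ => c.1) (fun c hc => by
        rw [Finset.mem_range]
        obtain ⟨h1, -⟩ := YoungDiagram.mem_ofRowLens.mp ((YoungDiagram.mem_cells _).mp hc)
        exact h1) (fun c : ℕ × ℕ => c.1)]
    refine Finset.sum_congr rfl (fun r _ => ?_)
    rw [Finset.sum_congr rfl (fun c hc => (Finset.mem_filter.mp hc).2),
      Finset.sum_const, smul_eq_mul, mul_comm, card_row_filter β hsort r]
  -- sum of entries = gval L
  have h2 : ∑ c ∈ (YoungDiagram.ofRowLens β (List.sortedGE_iff_pairwise.mpr hsort)).cells, T c.1 c.2 = gval L := by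
    rw [← Finset.sum_fiberwise_of_maps_to hent (fun c : ℕ × ℕ => T c.1 c.2), gval_eq]
    refine Finset.sum_congr rfl (fun j _ => ?_)
    rw [Finset.sum_congr rfl (fun c hc => (Finset.mem_filter.mp hc).2),
      Finset.sum_const, smul_eq_mul, mul_comm, hT j]
  -- cellwise bound
  have h1 : ∑ c ∈ (YoungDiagram.ofRowLens β (List.sortedGE_iff_pairwise.mpr hsort)).cells, c.1 ≤ ∑ c ∈ (YoungDiagram.ofRowLens β (List.sortedGE_iff_pairwise.mpr hsort)).cells, T c.1 c.2 :=
    Finset.sum_le_sum (fun c hc => by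
      have := cell_le_entry T c.1 c.2 (by
        have h := (YoungDiagram.mem_cells _).mp hc
        simpa using h)
      exact this)
  -- gval L ≤ n
  set bigL : List ℕ := (n + 2 - Multiset.card α.parts) ::
      (List.range n).map (fun j => Multiset.count (j + 1) α.parts) with hbigL
  have hperm : L.Perm (bigL.filter (fun x => decide (0 < x))) := by
    apply Multiset.coe_eq_coe.mp
    rw [hLdef]
    unfold wAlpha
    rw [Multiset.sort_eq, wAlpha_coe]
  have hparts_le : ∀ x ∈ α.parts, x ≤ n := by
    intro x hx
    have := Multiset.single_le_sum (fun y _ => Nat.zero_le y) x hx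
    rwa [α.parts_sum] at this
  have htail_len : ((List.range n).map (fun j => Multiset.count (j + 1) α.parts)).length = n := by
    simp
  have hbig : gval bigL = n := by
    show gval (_ :: _) = n
    rw [gval]
    set tl := (List.range n).map (fun j => Multiset.count (j + 1) α.parts) with htl
    have hgetD : ∀ j < n, tl.getD j 0 = Multiset.count (j + 1) α.parts := by
      intro j hj
      rw [List.getD_eq_getElem tl 0 (by rw [htail_len]; exact hj)]
      simp [htl]
    rw [gval_eq, ← sum_range_getD, htail_len, ← Finset.sum_add_distrib]
    calc ∑ j ∈ Finset.range n, (j * tl.getD j 0 + tl.getD j 0)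
        = ∑ j ∈ Finset.range n, (j + 1) * Multiset.count (j + 1) α.parts := by
          refine Finset.sum_congr rfl (fun j hj => ?_)
          rw [hgetD j (Finset.mem_range.mp hj)]
          ring
      _ = n := by
          rw [sum_weighted_count n α.parts (fun x hx => α.parts_pos hx) hparts_le, α.parts_sum]
  have hfinal : gval L ≤ n := by
    rw [gval_eq_pmin_of_sorted hLs, pmin_perm hperm, pmin_filter, ← hbig]
    exact pmin_le_gval bigL
  omega


/-- the tableau whose row `i` is filled with `i` -/
def T0 (β : List ℕ) (hsort : β.Pairwise (· ≥ ·)) :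
    SemistandardYoungTableau (YoungDiagram.ofRowLens β (List.sortedGE_iff_pairwise.mpr hsort)) where
  entry i j := if (i, j) ∈ YoungDiagram.ofRowLens β (List.sortedGE_iff_pairwise.mpr hsort) then i else 0
  row_weak' := by
    intro i j1 j2 hj hcell
    have h1 : (i, j1) ∈ YoungDiagram.ofRowLens β (List.sortedGE_iff_pairwise.mpr hsort) :=
      (YoungDiagram.ofRowLens β (List.sortedGE_iff_pairwise.mpr hsort)).up_left_mem (le_refl i) (by omega) hcell
    rw [if_pos h1, if_pos hcell]
  col_strict' := by
    intro i1 i2 j hi hcell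
    have h1 : (i1, j) ∈ YoungDiagram.ofRowLens β (List.sortedGE_iff_pairwise.mpr hsort) :=
      (YoungDiagram.ofRowLens β (List.sortedGE_iff_pairwise.mpr hsort)).up_left_mem (by omega) (le_refl j) hcell
    rw [if_pos h1, if_pos hcell]
    exact hi
  zeros' := by
    intro i j h
    rw [if_neg h]

lemma count_T0 (β : List ℕ) (hsort : β.Pairwise (· ≥ ·)) (v : ℕ) :
    ((YoungDiagram.ofRowLens β (List.sortedGE_iff_pairwise.mpr hsort)).cells.filter
      (fun c => (T0 β hsort) c.1 c.2 = v)).card = β.getD v 0 := by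
  rw [← card_row_filter β hsort v]
  congr 1
  apply Finset.filter_congr
  intro c hc
  have hcμ : (c.1, c.2) ∈ YoungDiagram.ofRowLens β (List.sortedGE_iff_pairwise.mpr hsort) := by
    have h := (YoungDiagram.mem_cells _).mp hc
    simpa using h
  show (T0 β hsort) c.1 c.2 = v ↔ c.1 = v
  show (if (c.1, c.2) ∈ YoungDiagram.ofRowLens β (List.sortedGE_iff_pairwise.mpr hsort) then c.1 else 0) = v ↔ c.1 = v
  rw [if_pos hcμ]

/-- the tableau with row `i` filled with `i` except the last cell of the last row gets `k` -/
def TB (β : List ℕ) (hsort : β.Pairwise (· ≥ ·)) :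
    SemistandardYoungTableau (YoungDiagram.ofRowLens β (List.sortedGE_iff_pairwise.mpr hsort)) where
  entry i j := if (i, j) ∈ YoungDiagram.ofRowLens β (List.sortedGE_iff_pairwise.mpr hsort) then
      (if i = β.length - 1 ∧ j = β.getD (β.length - 1) 0 - 1 then β.length else i) else 0
  row_weak' := by
    intro i j1 j2 hj hcell
    have h1 : (i, j1) ∈ YoungDiagram.ofRowLens β (List.sortedGE_iff_pairwise.mpr hsort) :=
      (YoungDiagram.ofRowLens β (List.sortedGE_iff_pairwise.mpr hsort)).up_left_mem (le_refl i) (by omega) hcell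
    rw [if_pos h1, if_pos hcell]
    obtain ⟨hlen, hc2⟩ := YoungDiagram.mem_ofRowLens.mp hcell
    by_cases hs : i = β.length - 1 ∧ j1 = β.getD (β.length - 1) 0 - 1
    · -- impossible : j1 is the last cell but j2 > j1 is also in the row
      exfalso
      obtain ⟨rfl, hj1⟩ := hs
      rw [List.getD_eq_getElem β 0 hlen] at hj1
      omega
    · rw [if_neg hs]
      split
      · exact Nat.le_of_lt hlen
      · exact le_refl i
  col_strict' := by
    intro i1 i2 j hi hcell
    have h1 : (i1, j) ∈ YoungDiagram.ofRowLens β (List.sortedGE_iff_pairwise.mpr hsort) :=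
      (YoungDiagram.ofRowLens β (List.sortedGE_iff_pairwise.mpr hsort)).up_left_mem (by omega) (le_refl j) hcell
    rw [if_pos h1, if_pos hcell]
    obtain ⟨hlen, -⟩ := YoungDiagram.mem_ofRowLens.mp hcell
    have hi1 : ¬(i1 = β.length - 1 ∧ j = β.getD (β.length - 1) 0 - 1) := by
      rintro ⟨rfl, -⟩
      omega
    rw [if_neg hi1]
    split
    · omega
    · exact hi
  zeros' := by
    intro i j h
    rw [if_neg h]

lemma count_TB (β : List ℕ) (hsort : β.Pairwise (· ≥ ·)) (hβ : β ≠ [])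
    (hpos : ∀ x ∈ β, 0 < x) (v : ℕ) :
    ((YoungDiagram.ofRowLens β (List.sortedGE_iff_pairwise.mpr hsort)).cells.filter
      (fun c => (TB β hsort) c.1 c.2 = v)).card =
      (if v < β.length - 1 then β.getD v 0
       else if v = β.length - 1 then β.getD (β.length - 1) 0 - 1
       else if v = β.length then 1 else 0) := by
  have hk : 0 < β.length := List.length_pos_iff.mpr hβ
  have hblast : 0 < β.getD (β.length - 1) 0 := by
    rw [List.getD_eq_getElem β 0 (by omega)]
    exact hpos _ (List.getElem_mem _)
  have hmem_simp : ∀ i j : ℕ, ((i, j) ∈ YoungDiagram.ofRowLens β (List.sortedGE_iff_pairwise.mpr hsort))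
      ↔ (i < β.length ∧ j < β.getD i 0) := by
    intro i j
    rw [YoungDiagram.mem_ofRowLens]
    constructor
    · rintro ⟨h1, h2⟩
      rw [List.getD_eq_getElem β 0 h1]
      exact ⟨h1, h2⟩
    · rintro ⟨h1, h2⟩
      rw [List.getD_eq_getElem β 0 h1] at h2
      exact ⟨h1, h2⟩
  have hentry : ∀ i j : ℕ, (i, j) ∈ YoungDiagram.ofRowLens β (List.sortedGE_iff_pairwise.mpr hsort) →
      (TB β hsort) i j = (if i = β.length - 1 ∧ j = β.getD (β.length - 1) 0 - 1
        then β.length else i) := by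
    intro i j hij
    show (if (i, j) ∈ YoungDiagram.ofRowLens β (List.sortedGE_iff_pairwise.mpr hsort) then _ else 0) = _
    rw [if_pos hij]
  by_cases hv1 : v < β.length - 1
  · rw [if_pos hv1, ← card_row_filter β hsort v]
    congr 1
    apply Finset.filter_congr
    intro c hc
    have hcμ : (c.1, c.2) ∈ YoungDiagram.ofRowLens β (List.sortedGE_iff_pairwise.mpr hsort) := by
      have h := (YoungDiagram.mem_cells _).mp hc
      simpa using h
    rw [hentry c.1 c.2 hcμ]
    constructor
    · intro h
      by_cases hs : c.1 = β.length - 1 ∧ c.2 = β.getD (β.length - 1) 0 - 1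
      · rw [if_pos hs] at h; omega
      · rwa [if_neg hs] at h
    · intro h
      rw [if_neg (by omega)]
      exact h
  · rw [if_neg hv1]
    by_cases hv2 : v = β.length - 1
    · rw [if_pos hv2]
      have : ((YoungDiagram.ofRowLens β (List.sortedGE_iff_pairwise.mpr hsort)).cells.filter
          (fun c => (TB β hsort) c.1 c.2 = v))
          = (Finset.range (β.getD (β.length - 1) 0 - 1)).image (fun j => (β.length - 1, j)) := by
        ext ⟨i, j⟩
        simp only [Finset.mem_filter, YoungDiagram.mem_cells, Finset.mem_image,
          Finset.mem_range, Prod.mk.injEq]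
        constructor
        · rintro ⟨hij, hval⟩
          rw [hentry i j (by simpa using hij)] at hval
          rw [hmem_simp] at hij
          by_cases hs : i = β.length - 1 ∧ j = β.getD (β.length - 1) 0 - 1
          · rw [if_pos hs] at hval; omega
          · rw [if_neg hs] at hval
            subst hv2
            subst hval
            refine ⟨j, by omega, rfl, rfl⟩
        · rintro ⟨j', hj', rfl, rfl⟩
          have hij : (β.length - 1, j') ∈ YoungDiagram.ofRowLens β (List.sortedGE_iff_pairwise.mpr hsort) := by
            rw [hmem_simp]; omega
          refine ⟨by simpa using hij, ?_⟩
          rw [hentry _ _ hij, if_neg (by omega), hv2]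
      rw [this, Finset.card_image_of_injective _ (fun a b h => by simpa using h),
        Finset.card_range]
    · rw [if_neg hv2]
      by_cases hv3 : v = β.length
      · rw [if_pos hv3]
        have : ((YoungDiagram.ofRowLens β (List.sortedGE_iff_pairwise.mpr hsort)).cells.filter
            (fun c => (TB β hsort) c.1 c.2 = v))
            = {(β.length - 1, β.getD (β.length - 1) 0 - 1)} := by
          ext ⟨i, j⟩
          simp only [Finset.mem_filter, YoungDiagram.mem_cells, Finset.mem_singleton,
            Prod.mk.injEq]
          constructor
          · rintro ⟨hij, hval⟩
            rw [hentry i j (by simpa using hij)] at hval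
            rw [hmem_simp] at hij
            by_cases hs : i = β.length - 1 ∧ j = β.getD (β.length - 1) 0 - 1
            · exact hs
            · rw [if_neg hs] at hval; omega
          · rintro ⟨rfl, rfl⟩
            have hij : (β.length - 1, β.getD (β.length - 1) 0 - 1)
                ∈ YoungDiagram.ofRowLens β (List.sortedGE_iff_pairwise.mpr hsort) := by
              rw [hmem_simp]; omega
            refine ⟨by simpa using hij, ?_⟩
            rw [hentry _ _ hij, if_pos ⟨rfl, rfl⟩, hv3]
        rw [this, Finset.card_singleton]
      · rw [if_neg hv3]
        rw [Finset.card_eq_zero, Finset.filter_eq_empty_iff]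
        rintro ⟨i, j⟩ hij
        have hijμ : (i, j) ∈ YoungDiagram.ofRowLens β (List.sortedGE_iff_pairwise.mpr hsort) := by
          have h := (YoungDiagram.mem_cells _).mp hij
          simpa using h
        rw [hentry i j hijμ]
        have hi : i < β.length := (hmem_simp i j).mp hijμ |>.1
        by_cases hs : i = β.length - 1 ∧ j = β.getD (β.length - 1) 0 - 1
        · rw [if_pos hs]; omega
        · rw [if_neg hs]; omega


lemma backward (n : ℕ) (β : List ℕ) (hsort : β.Pairwise (· ≥ ·))
    (hpos : ∀ x ∈ β, 0 < x) (hsum : β.sum = n + 2)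
    (hN : ∑ r ∈ Finset.range β.length, r * β.getD r 0 ≤ n) :
    ∃ α : Nat.Partition n,
      ∃ T : SemistandardYoungTableau (YoungDiagram.ofRowLens β (List.sortedGE_iff_pairwise.mpr hsort)),
        ∀ j : ℕ,
          ((YoungDiagram.ofRowLens β (List.sortedGE_iff_pairwise.mpr hsort)).cells.filter
              (fun c => T c.1 c.2 = j)).card = (wAlpha n α).getD j 0 := by
  have hβne : β ≠ [] := by
    intro h
    rw [h] at hsum
    simp at hsum
  have hk : 0 < β.length := List.length_pos_iff.mpr hβne
  have hb : ∀ r, r < β.length → 0 < β.getD r 0 := by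
    intro r hr
    rw [List.getD_eq_getElem β 0 hr]
    exact hpos _ (List.getElem_mem _)
  have hbmono : ∀ r s : ℕ, r ≤ s → s < β.length → β.getD s 0 ≤ β.getD r 0 := by
    intro r s hrs hs
    rcases Nat.eq_or_lt_of_le hrs with rfl | hlt
    · exact le_refl _
    · rw [List.getD_eq_getElem β 0 hs, List.getD_eq_getElem β 0 (by omega)]
      exact List.pairwise_iff_getElem.mp hsort r s (by omega) hs hlt
  have hsum' : ∑ r ∈ Finset.range β.length, β.getD r 0 = n + 2 := by
    rw [sum_range_getD, hsum]
  have hkN : β.length - 1 ≤ ∑ r ∈ Finset.range β.length, r * β.getD r 0 := by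
    have h1 : (β.length - 1) * β.getD (β.length - 1) 0
        ≤ ∑ r ∈ Finset.range β.length, r * β.getD r 0 :=
      Finset.single_le_sum (f := fun r => r * β.getD r 0) (fun i _ => Nat.zero_le _)
        (Finset.mem_range.mpr (by omega))
    have h2 := hb (β.length - 1) (by omega)
    have h3 : β.length - 1 ≤ (β.length - 1) * β.getD (β.length - 1) 0 :=
      Nat.le_mul_of_pos_right _ h2
    omega
  have hβexp : β = (List.range β.length).map (fun r => β.getD r 0) := by
    refine List.ext_getElem (by simp) (fun i h1 h2 => ?_)
    simp only [List.getElem_map, List.getElem_range]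
    exact (List.getD_eq_getElem β 0 h1).symm
  by_cases hD : ∑ r ∈ Finset.range β.length, r * β.getD r 0 = n
  -- ===================== CASE A : D = 0 =====================
  · set cA : ℕ → ℕ := fun t => if 1 ≤ t then β.getD t 0 else 0 with hcA
    have hposA : ∀ {x : ℕ},
        x ∈ ((Multiset.range β.length).bind fun t => Multiset.replicate (cA t) t) → 0 < x :=
      fun hx => pos_of_mem_bind_range (by simp [hcA]) hx
    have hsumA : ((Multiset.range β.length).bind fun t => Multiset.replicate (cA t) t).sum = n := by
      rw [sum_bind_range]
      rw [← hD]
      refine Finset.sum_congr rfl (fun t _ => ?_)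
      by_cases h : 1 ≤ t
      · rw [hcA]; simp only [if_pos h]; ring
      · have : t = 0 := by omega
        subst this
        simp [hcA]
    set α : Nat.Partition n := ⟨_, hposA, hsumA⟩ with hα
    have hsplit0 : ∑ t ∈ Finset.range β.length, β.getD t 0
        = β.getD 0 0 + ∑ t ∈ Finset.range β.length, cA t := by
      have h : ∀ t ∈ Finset.range β.length, β.getD t 0
          = (if t = 0 then β.getD t 0 else 0) + cA t := by
        intro t _
        show β.getD t 0 = (if t = 0 then β.getD t 0 else 0) + (if 1 ≤ t then β.getD t 0 else 0)
        split_ifs <;> omega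
      rw [Finset.sum_congr rfl h, Finset.sum_add_distrib,
        Finset.sum_ite_eq' (Finset.range β.length) 0 (fun t => β.getD t 0),
        if_pos (Finset.mem_range.mpr hk)]
    have hcard : Multiset.card α.parts = n + 2 - β.getD 0 0 := by
      show Multiset.card ((Multiset.range β.length).bind fun t => Multiset.replicate (cA t) t) = _
      rw [card_bind_range]
      omega
    have hm : n + 2 - Multiset.card α.parts = β.getD 0 0 := by
      rw [hcard]
      have hble : β.getD 0 0 ≤ n + 2 := by omega
      omega
    have hcount : ∀ p : ℕ, Multiset.count p α.parts = if p < β.length then cA p else 0 := by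
      intro p
      show Multiset.count p ((Multiset.range β.length).bind fun t => Multiset.replicate (cA t) t) = _
      exact count_bind_range β.length cA p
    -- the filtered list equals β
    have hlist : ((n + 2 - Multiset.card α.parts) ::
        (List.range n).map (fun j => Multiset.count (j + 1) α.parts)).filter
        (fun x => decide (0 < x)) = β := by
      rw [List.filter_cons_of_pos (by
        rw [hm]
        simpa using hb 0 hk)]
      have htail : ((List.range n).map (fun j => Multiset.count (j + 1) α.parts)).filter
          (fun x => decide (0 < x)) = (List.range (β.length - 1)).map (fun j => β.getD (j + 1) 0) := by
        rw [filter_map_range_truncate _ (β.length - 1) n (by omega) (fun j h1 h2 => by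
          rw [hcount]
          by_cases h : j + 1 < β.length
          · omega
          · rw [if_neg h])]
        rw [filter_map_pos _ _ (fun j hj => by
          rw [List.mem_range] at hj
          rw [hcount, if_pos (by omega), hcA]
          simp only [if_pos (by omega : 1 ≤ j + 1)]
          exact hb (j + 1) (by omega))]
        refine List.map_congr_left (fun j hj => ?_)
        rw [List.mem_range] at hj
        rw [hcount, if_pos (by omega), hcA]
        simp only [if_pos (by omega : 1 ≤ j + 1)]
      rw [htail, hm]
      refine (List.ext_getElem (by simp; omega) (fun i h1 h2 => ?_)).symm
      match i with
      | 0 => simp [(List.getD_eq_getElem β 0 h1).symm]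
      | (i+1) =>
        simp only [List.getElem_cons_succ, List.getElem_map, List.getElem_range]
        exact (List.getD_eq_getElem β 0 h1).symm
    have hwA : wAlpha n α = β := by
      unfold wAlpha
      exact sort_eq_of_sorted hsort (by rw [wAlpha_coe, hlist])
    refine ⟨α, T0 β hsort, fun j => ?_⟩
    rw [hwA, count_T0]
  -- ===================== CASE B : D > 0 =====================
  · have hDpos : 0 < n - ∑ r ∈ Finset.range β.length, r * β.getD r 0 := by omega
    set N := ∑ r ∈ Finset.range β.length, r * β.getD r 0 with hNdef
    set D := n - N with hDdef
    set k := β.length with hkdef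
    set cB : ℕ → ℕ := fun t => if 1 ≤ t then
        (if t = k - 1 then β.getD t 0 - 1 else β.getD t 0) else 0 with hcB
    set partsB : Multiset ℕ :=
      ((Multiset.range k).bind fun t => Multiset.replicate (cB t) t) + {k - 1 + D} with hparts
    have hposB : ∀ {x : ℕ}, x ∈ partsB → 0 < x := by
      intro x hx
      rw [hparts, Multiset.mem_add] at hx
      rcases hx with hx | hx
      · exact pos_of_mem_bind_range (by simp [hcB]) hx
      · rw [Multiset.mem_singleton] at hx
        omega
    have hkey : ∑ t ∈ Finset.range k, cB t * t + (k - 1) = N := by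
      rw [hNdef]
      have : ∀ t ∈ Finset.range k, t * β.getD t 0
          = cB t * t + (if t = k - 1 then t else 0) := by
        intro t ht
        rw [Finset.mem_range] at ht
        have hbt := hb t ht
        rw [hcB]
        by_cases h1 : 1 ≤ t
        · simp only [if_pos h1]
          by_cases h2 : t = k - 1
          · rw [if_pos h2, if_pos h2]
            obtain ⟨m, hm⟩ : ∃ m, β.getD t 0 = m + 1 := ⟨β.getD t 0 - 1, by omega⟩
            rw [hm, Nat.add_sub_cancel]
            ring
          · rw [if_neg h2, if_neg h2]
            ring
        · have : t = 0 := by omega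
          subst this
          simp
      rw [Finset.sum_congr rfl this, Finset.sum_add_distrib,
        Finset.sum_ite_eq' (Finset.range k) (k - 1) (fun t => t),
        if_pos (Finset.mem_range.mpr (by omega))]
    have hsumB : partsB.sum = n := by
      rw [hparts, Multiset.sum_add, sum_bind_range, Multiset.sum_singleton]
      omega
    set α : Nat.Partition n := ⟨partsB, hposB, hsumB⟩ with hα
    have hcount : ∀ p : ℕ, Multiset.count p α.parts
        = (if p < k then cB p else 0) + (if p = k - 1 + D then 1 else 0) := by
      intro p
      show Multiset.count p partsB = _
      rw [hparts, Multiset.count_add, count_bind_range, Multiset.count_singleton]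
    have hD1 : 1 ≤ D := by omega
    have hkD : k - 1 + D ≤ n := by omega
    have hcardB : Multiset.card α.parts = ∑ t ∈ Finset.range k, cB t + 1 := by
      show Multiset.card partsB = _
      rw [hparts, Multiset.card_add, card_bind_range, Multiset.card_singleton]
    -- the m value
    have hmB : n + 2 - Multiset.card α.parts
        = (if 2 ≤ k then β.getD 0 0 else n + 1) := by
      by_cases h2k : 2 ≤ k
      · rw [if_pos h2k, hcardB]
        have hsplitB : ∑ t ∈ Finset.range k, β.getD t 0
            = β.getD 0 0 + ∑ t ∈ Finset.range k, cB t + 1 := by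
          have h : ∀ t ∈ Finset.range k, β.getD t 0
              = (if t = 0 then β.getD t 0 else 0) + cB t + (if t = k - 1 then 1 else 0) := by
            intro t ht
            rw [Finset.mem_range] at ht
            have hbt := hb t ht
            show β.getD t 0 = (if t = 0 then β.getD t 0 else 0)
              + (if 1 ≤ t then (if t = k - 1 then β.getD t 0 - 1 else β.getD t 0) else 0)
              + (if t = k - 1 then 1 else 0)
            split_ifs <;> omega
          rw [Finset.sum_congr rfl h, Finset.sum_add_distrib, Finset.sum_add_distrib,
            Finset.sum_ite_eq' (Finset.range k) 0 (fun t => β.getD t 0),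
            if_pos (Finset.mem_range.mpr hk),
            Finset.sum_ite_eq' (Finset.range k) (k - 1) (fun _ => 1),
            if_pos (Finset.mem_range.mpr (by omega))]
        rw [hsum'] at hsplitB
        omega
      · rw [if_neg h2k, hcardB]
        have hk1 : k = 1 := by omega
        have : ∑ t ∈ Finset.range k, cB t = 0 := by
          rw [hk1, Finset.sum_range_one]
          show (if 1 ≤ 0 then _ else 0) = 0
          rw [if_neg (by omega)]
        omega
    -- tail values
    have hg : ∀ j : ℕ, Multiset.count (j + 1) α.parts
        = (if j + 1 < k then cB (j + 1) else 0) + (if j = k - 2 + D ∧ 2 ≤ k ∨ j = D - 1 ∧ k = 1 then 1 else 0) := by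
      intro j
      rw [hcount (j + 1)]
      congr 1
      by_cases h2k : 2 ≤ k
      · by_cases h : j + 1 = k - 1 + D
        · rw [if_pos h, if_pos (by omega)]
        · rw [if_neg h, if_neg (by omega)]
      · have hk1 : k = 1 := by omega
        by_cases h : j + 1 = k - 1 + D
        · rw [if_pos h, if_pos (by omega)]
        · rw [if_neg h, if_neg (by omega)]
    by_cases hlast : 2 ≤ β.getD (k - 1) 0
    -- ---------- subcase B1 : last row length ≥ 2, use TB ----------
    · set LB : List ℕ := ((List.range (k - 1)).map (fun r => β.getD r 0))
        ++ [β.getD (k - 1) 0 - 1, 1] with hLB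
      have hsortLB : LB.Pairwise (· ≥ ·) := by
        rw [hLB]
        rw [List.pairwise_append]
        refine ⟨?_, ?_, ?_⟩
        · have hsub : ((List.range (k - 1)).map (fun r => β.getD r 0)).Sublist β := by
            nth_rewrite 2 [hβexp]
            exact List.Sublist.map _ (List.range_sublist.mpr (by omega))
          exact List.Pairwise.sublist hsub hsort
        · show List.Pairwise (· ≥ ·) [β.getD (k - 1) 0 - 1, 1]
          rw [List.pairwise_cons]
          exact ⟨fun b hb' => by simp only [List.mem_singleton] at hb'; omega, by simp⟩
        · intro a ha b hbmem
          rw [List.mem_map] at ha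
          obtain ⟨r, hr, rfl⟩ := ha
          rw [List.mem_range] at hr
          have h1 : β.getD (k - 1) 0 ≤ β.getD r 0 := hbmono r (k - 1) (by omega) (by omega)
          rw [List.mem_cons, List.mem_singleton] at hbmem
          rcases hbmem with rfl | rfl <;> omega
      have hlistB : ((n + 2 - Multiset.card α.parts) ::
          (List.range n).map (fun j => Multiset.count (j + 1) α.parts)).filter
          (fun x => decide (0 < x)) = LB := by
        by_cases h2k : 2 ≤ k
        · rw [List.filter_cons_of_pos (by
            rw [hmB, if_pos h2k]
            simpa using hb 0 hk)]
          have htail : ((List.range n).map (fun j => Multiset.count (j + 1) α.parts)).filter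
              (fun x => decide (0 < x))
              = (List.range (k - 2)).map (fun j => β.getD (j + 1) 0)
                ++ ([β.getD (k - 1) 0 - 1] ++ [1]) := by
            rw [filter_map_range_split n (k - 2) (k - 2 + D) _ (by omega) (by omega)
              (fun j hj => by
                rw [hg, if_pos (by omega), if_neg (by omega)]
                show 0 < (if 1 ≤ j + 1 then (if j + 1 = k - 1 then β.getD (j+1) 0 - 1 else β.getD (j+1) 0) else 0) + 0
                rw [if_pos (by omega), if_neg (by omega)]
                have := hb (j + 1) (by omega)
                omega)
              (fun j hj1 hj2 => by
                rw [hg, if_neg (by omega), if_neg (by omega)])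
              (fun j hj1 hj2 => by
                rw [hg, if_neg (by omega), if_neg (by omega)])]
            have hgj1 : Multiset.count (k - 2 + 1) α.parts = β.getD (k - 1) 0 - 1 := by
              rw [hg, if_pos (by omega), if_neg (by omega)]
              show (if 1 ≤ k - 2 + 1 then (if k - 2 + 1 = k - 1 then β.getD (k-2+1) 0 - 1 else β.getD (k-2+1) 0) else 0) + 0 = _
              rw [if_pos (by omega), if_pos (by omega)]
              have : k - 2 + 1 = k - 1 := by omega
              rw [this]
              omega
            have hgj2 : Multiset.count (k - 2 + D + 1) α.parts = 1 := by
              rw [hg, if_neg (by omega), if_pos (by omega)]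
            rw [hgj1, hgj2]
            rw [List.filter_cons_of_pos (by simp only [decide_eq_true_eq]; omega),
              List.filter_cons_of_pos (by simp only [decide_eq_true_eq]; omega)]
            congr 1
            refine List.map_congr_left (fun j hj => ?_)
            rw [List.mem_range] at hj
            rw [hg, if_pos (by omega), if_neg (by omega)]
            show (if 1 ≤ j + 1 then (if j + 1 = k - 1 then β.getD (j+1) 0 - 1 else β.getD (j+1) 0) else 0) + 0 = _
            rw [if_pos (by omega), if_neg (by omega)]
            omega
          rw [htail, hmB, if_pos h2k, hLB]
          -- b0 :: (map (k-2) ++ [b-1,1]) = map (k-1) ++ [b-1,1]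
          have hpre : (List.range (k - 1)).map (fun r => β.getD r 0)
              = β.getD 0 0 :: (List.range (k - 2)).map (fun j => β.getD (j + 1) 0) := by
            refine List.ext_getElem (by simp; omega) (fun i h1 h2 => ?_)
            match i with
            | 0 => simp
            | (i+1) => simp
          rw [hpre]
          rfl
        · -- k = 1
          have hk1 : k = 1 := by omega
          have hb0 : β.getD 0 0 = n + 2 := by
            rw [← hsum', hk1, Finset.sum_range_one]
          have hNzero : N = 0 := by
            rw [hNdef, hk1, Finset.sum_range_one]
            simp
          have hDn : D = n := by omega
          rw [List.filter_cons_of_pos (by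
            rw [hmB, if_neg (by omega)]
            simp)]
          have htail : ((List.range n).map (fun j => Multiset.count (j + 1) α.parts)).filter
              (fun x => decide (0 < x)) = [1].filter (fun x => decide (0 < x)) := by
            refine filter_map_range_single n (D - 1) 1 _ (by omega)
              (fun j hj => by
                rw [hg, if_neg (by omega), if_neg (by omega)])
              (by rw [hg, if_neg (by omega), if_pos (by omega)])
              (fun j hj1 hj2 => by
                rw [hg, if_neg (by omega), if_neg (by omega)])
          rw [htail, hmB, if_neg (by omega), hLB, hk1]
          simp only [Nat.sub_self, List.range_zero, List.map_nil, List.nil_append]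
          rw [List.filter_cons_of_pos (by simp), List.filter_nil]
          have : β.getD (1 - 1) 0 - 1 = n + 1 := by
            rw [show (1:ℕ) - 1 = 0 from rfl, hb0]
            omega
          rw [this]
      have hwB : wAlpha n α = LB := by
        unfold wAlpha
        refine sort_eq_of_sorted hsortLB ?_
        rw [wAlpha_coe, hlistB]
      have hlenpre : ((List.range (k - 1)).map (fun r => β.getD r 0)).length = k - 1 := by simp
      have hgetD : ∀ v : ℕ, LB.getD v 0
          = (if v < k - 1 then β.getD v 0
             else if v = k - 1 then β.getD (k - 1) 0 - 1
             else if v = k then 1 else 0) := by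
        intro v
        rw [hLB]
        by_cases h1 : v < k - 1
        · rw [if_pos h1, List.getD_append _ _ _ v (by simp only [List.length_map, List.length_range, List.length_cons, List.length_append, List.length_nil]; omega)]
          rw [List.getD_eq_getElem _ 0 (by simp only [List.length_map, List.length_range, List.length_cons, List.length_append, List.length_nil]; omega)]
          simp
        · rw [if_neg h1, List.getD_append_right _ _ _ v (by simp only [List.length_map, List.length_range, List.length_cons, List.length_append, List.length_nil]; omega)]
          by_cases h2 : v = k - 1
          · rw [if_pos h2]
            have : v - ((List.range (k - 1)).map (fun r => β.getD r 0)).length = 0 := by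
              rw [hlenpre]; omega
            rw [this]
            rfl
          · rw [if_neg h2]
            by_cases h3 : v = k
            · rw [if_pos h3]
              have : v - ((List.range (k - 1)).map (fun r => β.getD r 0)).length = 1 := by
                rw [hlenpre]; omega
              rw [this]
              rfl
            · rw [if_neg h3]
              apply List.getD_eq_default
              simp only [List.length_cons, List.length_singleton, List.length_nil]
              rw [hlenpre]
              omega
      refine ⟨α, TB β hsort, fun v => ?_⟩
      rw [hwB, count_TB β hsort hβne hpos v, hgetD v]
    -- ---------- subcase B2 : last row length = 1, use T0 ----------
    · have hlast1 : β.getD (k - 1) 0 = 1 := by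
        have := hb (k - 1) (by omega)
        omega
      have h2k : 2 ≤ k := by
        by_contra hcon
        have hk10 : k - 1 = 0 := by omega
        have hb0 : β.getD 0 0 = n + 2 := by
          rw [← hsum', show k = 1 from by omega, Finset.sum_range_one]
        rw [hk10] at hlast1
        omega
      have hlistB : ((n + 2 - Multiset.card α.parts) ::
          (List.range n).map (fun j => Multiset.count (j + 1) α.parts)).filter
          (fun x => decide (0 < x)) = β := by
        rw [List.filter_cons_of_pos (by
          rw [hmB, if_pos h2k]
          simpa using hb 0 hk)]
        have htail : ((List.range n).map (fun j => Multiset.count (j + 1) α.parts)).filter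
            (fun x => decide (0 < x))
            = (List.range (k - 2)).map (fun j => β.getD (j + 1) 0) ++ ([] ++ [1]) := by
          rw [filter_map_range_split n (k - 2) (k - 2 + D) _ (by omega) (by omega)
            (fun j hj => by
              rw [hg, if_pos (by omega), if_neg (by omega)]
              show 0 < (if 1 ≤ j + 1 then (if j + 1 = k - 1 then β.getD (j+1) 0 - 1 else β.getD (j+1) 0) else 0) + 0
              rw [if_pos (by omega), if_neg (by omega)]
              have := hb (j + 1) (by omega)
              omega)
            (fun j hj1 hj2 => by
              rw [hg, if_neg (by omega), if_neg (by omega)])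
            (fun j hj1 hj2 => by
              rw [hg, if_neg (by omega), if_neg (by omega)])]
          have hgj1 : Multiset.count (k - 2 + 1) α.parts = 0 := by
            rw [hg, if_pos (by omega), if_neg (by omega)]
            show (if 1 ≤ k - 2 + 1 then (if k - 2 + 1 = k - 1 then β.getD (k-2+1) 0 - 1 else β.getD (k-2+1) 0) else 0) + 0 = _
            rw [if_pos (by omega), if_pos (by omega)]
            have heq : k - 2 + 1 = k - 1 := by omega
            rw [heq, hlast1]
          have hgj2 : Multiset.count (k - 2 + D + 1) α.parts = 1 := by
            rw [hg, if_neg (by omega), if_pos (by omega)]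
          rw [hgj1, hgj2]
          rw [show List.filter (fun x => decide (0 < x)) [0] = [] from rfl,
            show List.filter (fun x => decide (0 < x)) [1] = [1] from rfl]
          congr 1
          refine List.map_congr_left (fun j hj => ?_)
          rw [List.mem_range] at hj
          rw [hg, if_pos (by omega), if_neg (by omega)]
          show (if 1 ≤ j + 1 then (if j + 1 = k - 1 then β.getD (j+1) 0 - 1 else β.getD (j+1) 0) else 0) + 0 = _
          rw [if_pos (by omega), if_neg (by omega)]
          omega
        rw [htail, hmB, if_pos h2k]
        -- b0 :: (map (k-2) ++ [1]) = β
        refine (List.ext_getElem (by simp; omega) (fun i h1 h2 => ?_)).symm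
        match i with
        | 0 => simp [(List.getD_eq_getElem β 0 h1).symm]
        | (i+1) =>
          simp only [List.getElem_cons_succ, List.nil_append]
          by_cases hik : i < k - 2
          · rw [List.getElem_append_left (by simp only [List.length_map, List.length_range, List.length_cons, List.length_append, List.length_nil]; omega)]
            simp only [List.getElem_map, List.getElem_range]
            exact (List.getD_eq_getElem β 0 h1).symm
          · rw [List.getElem_append_right (by simp only [List.length_map, List.length_range, List.length_cons, List.length_append, List.length_nil]; omega)]
            have hik2 : i = k - 2 := by
              simp only [List.length_cons] at h2
              simp at h2
              omega
            simp only [List.nil_append, List.getElem_singleton]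
            have h3 : i + 1 = k - 1 := by omega
            calc β[i+1] = β.getD (i+1) 0 := (List.getD_eq_getElem β 0 h1).symm
              _ = β.getD (k-1) 0 := by rw [h3]
              _ = 1 := hlast1
      have hwB : wAlpha n α = β := by
        unfold wAlpha
        refine sort_eq_of_sorted hsort ?_
        rw [wAlpha_coe, hlistB]
      refine ⟨α, T0 β hsort, fun v => ?_⟩
      rw [hwB, count_T0]

end Stmt18Aux

/-- a partition `β = (β₁,…,β_k)` of `n+2` satisfies `K_{β,w(α)} > 0` for
some partition `α` of `n` (i.e. there is a semistandard Young tableau of shape `β` and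
content `w(α)`, entries being `0`-indexed) if and only if
`β₁ − 2 ≥ β₃ + 2β₄ + ⋯ + (k−2)β_k`. -/
theorem stmt18 (n : ℕ) (β : List ℕ) (hsort : β.Pairwise (· ≥ ·))
    (hpos : ∀ x ∈ β, 0 < x) (hsum : β.sum = n + 2) :
    (∃ α : Nat.Partition n,
        ∃ T : SemistandardYoungTableau (YoungDiagram.ofRowLens β (List.sortedGE_iff_pairwise.mpr hsort)),
          ∀ j : ℕ,
            ((YoungDiagram.ofRowLens β (List.sortedGE_iff_pairwise.mpr hsort)).cells.filter
                (fun c => T c.1 c.2 = j)).card = (wAlpha n α).getD j 0) ↔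
      2 + ∑ j ∈ Finset.range β.length, (j - 1) * β.getD j 0 ≤ β.headI := by
  have hβne : β ≠ [] := by
    intro h
    rw [h] at hsum
    simp at hsum
  have hk : 0 < β.length := List.length_pos_iff.mpr hβne
  have hsum' : ∑ r ∈ Finset.range β.length, β.getD r 0 = n + 2 := by
    rw [Stmt18Aux.sum_range_getD, hsum]
  have hhead : β.headI = β.getD 0 0 := by
    cases β with
    | nil => simp at hβne
    | cons a t => rfl
  have hkey : ∑ j ∈ Finset.range β.length, (j - 1) * β.getD j 0 + (n + 2)
      = (∑ j ∈ Finset.range β.length, j * β.getD j 0) + β.getD 0 0 := by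
    rw [← hsum', ← Finset.sum_add_distrib]
    have h : ∀ j ∈ Finset.range β.length, (j - 1) * β.getD j 0 + β.getD j 0
        = j * β.getD j 0 + (if j = 0 then β.getD j 0 else 0) := by
      intro j _
      by_cases hj : j = 0
      · subst hj; simp
      · rw [if_neg hj]
        have he : j - 1 + 1 = j := by omega
        calc (j - 1) * β.getD j 0 + β.getD j 0 = (j - 1 + 1) * β.getD j 0 := by ring
          _ = j * β.getD j 0 + 0 := by rw [he]; ring
    rw [Finset.sum_congr rfl h, Finset.sum_add_distrib,
      Finset.sum_ite_eq' (Finset.range β.length) 0 (fun j => β.getD j 0),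
      if_pos (Finset.mem_range.mpr hk)]
  constructor
  · rintro ⟨α, T, hT⟩
    have hfwd := Stmt18Aux.forward n β hsort α T hT
    rw [hhead]
    omega
  · intro hineq
    apply Stmt18Aux.backward n β hsort hpos hsum
    rw [hhead] at hineq
    omega
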